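/- Fix μ̂ ∈ ℝ and σ̂ > 0, and define the expected-gap function G : ℝ → ℝ by G(a) = μ̂ + σ̂·λ((a − μ̂)/σ̂) − a, where λ is the inverse Mills ratio. Then G is differentiable on ℝ with derivative G'(a) = λ'((a − μ̂)/σ̂) − 1, and −1 < G'(a) < 0 for every a ∈ ℝ; in particular G is strictly decreasing on ℝ. -/

import Mathlib

open Real MeasureTheory

/-- Standard normal density `φ(z) = exp(−z²/2)/√(2π)`. -/
noncomputable def stdNormalPdf (z : ℝ) : ℝ :=
  Real.exp (-z ^ 2 / 2) / Real.sqrt (2 * Real.pi)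

/-- Standard normal cumulative distribution function `Φ`. -/
noncomputable def stdNormalCdf (z : ℝ) : ℝ :=
  ∫ t in Set.Iic z, stdNormalPdf t

/-- Inverse Mills ratio `λ(z) = φ(z)/(1 − Φ(z))`. -/
noncomputable def mills (z : ℝ) : ℝ :=
  stdNormalPdf z / (1 - stdNormalCdf z)

section aux
open Real MeasureTheory Filter Set

lemma pdf_pos (z : ℝ) : 0 < stdNormalPdf z :=
  div_pos (exp_pos _) (Real.sqrt_pos.2 (by positivity))

lemma pdf_cont : Continuous stdNormalPdf := by
  unfold stdNormalPdf
  fun_prop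

lemma pdf_eq (z : ℝ) : stdNormalPdf z = Real.exp (-(1/2) * z ^ 2) * (Real.sqrt (2 * Real.pi))⁻¹ := by
  unfold stdNormalPdf; ring_nf

lemma pdf_integrable : Integrable stdNormalPdf := by
  have h := (integrable_exp_neg_mul_sq (by norm_num : (0:ℝ) < 1/2)).mul_const (Real.sqrt (2 * Real.pi))⁻¹
  exact h.congr (Filter.EventuallyEq.of_eq (funext fun z => (pdf_eq z).symm))

lemma integral_pdf : ∫ z, stdNormalPdf z = 1 := by
  have h : ∫ z : ℝ, Real.exp (-(1/2) * z ^ 2) = Real.sqrt (π / (1/2)) := integral_gaussian (1/2)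
  calc ∫ z, stdNormalPdf z = ∫ z : ℝ, Real.exp (-(1/2) * z ^ 2) * (Real.sqrt (2 * Real.pi))⁻¹ := by
        simp_rw [pdf_eq]
    _ = Real.sqrt (π / (1/2)) * (Real.sqrt (2 * Real.pi))⁻¹ := by rw [integral_mul_const, h]
    _ = 1 := by
        rw [show π / (1/2) = 2 * π by ring]
        field_simp

lemma Q_eq (z : ℝ) : 1 - stdNormalCdf z = ∫ t in Set.Ioi z, stdNormalPdf t := by
  have h := integral_add_compl (measurableSet_Iic (a := z)) pdf_integrable
  rw [compl_Iic] at h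
  rw [integral_pdf] at h
  rw [stdNormalCdf]; linarith

lemma Q_pos (z : ℝ) : 0 < 1 - stdNormalCdf z := by
  rw [Q_eq]
  rw [setIntegral_pos_iff_support_of_nonneg_ae]
  · have : Function.support stdNormalPdf = Set.univ := by
      ext x; simp [(pdf_pos x).ne']
    rw [this, Set.univ_inter]
    simp [Real.volume_Ioi]
  · exact Eventually.of_forall fun x => (pdf_pos x).le
  · exact pdf_integrable.integrableOn

lemma cdf_lt_one (z : ℝ) : stdNormalCdf z < 1 := by linarith [Q_pos z]

lemma cdf_hasDerivAt (z : ℝ) : HasDerivAt stdNormalCdf (stdNormalPdf z) z := by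
  have key : ∀ x : ℝ, stdNormalCdf x = stdNormalCdf 0 + ∫ t in (0:ℝ)..x, stdNormalPdf t := by
    intro x
    have := intervalIntegral.integral_Iic_sub_Iic (f := stdNormalPdf) (μ := volume)
      (a := 0) (b := x) pdf_integrable.integrableOn pdf_integrable.integrableOn
    unfold stdNormalCdf
    linarith [this]
  have h : HasDerivAt (fun x => stdNormalCdf 0 + ∫ t in (0:ℝ)..x, stdNormalPdf t)
      (stdNormalPdf z) z := by
    refine HasDerivAt.const_add _ ?_
    exact intervalIntegral.integral_hasDerivAt_right
      pdf_integrable.intervalIntegrable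
      (pdf_cont.stronglyMeasurableAtFilter _ _)
      pdf_cont.continuousAt
  have : stdNormalCdf = fun x => stdNormalCdf 0 + ∫ t in (0:ℝ)..x, stdNormalPdf t :=
    funext key
  rw [this]; exact h

lemma pdf_hasDerivAt (z : ℝ) : HasDerivAt stdNormalPdf (-z * stdNormalPdf z) z := by
  have h1 : HasDerivAt (fun z : ℝ => -z ^ 2 / 2) (-z) z := by
    have := ((hasDerivAt_pow 2 z).neg).div_const 2
    simpa using this.congr_deriv (by ring)
  have h2 := (h1.exp).div_const (Real.sqrt (2 * Real.pi))
  exact h2.congr_deriv (by unfold stdNormalPdf; ring)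

end aux

section limits
open Real MeasureTheory Filter Set

lemma pdf_tendsto_zero : Filter.Tendsto stdNormalPdf Filter.atTop (nhds 0) := by
  have h : Filter.Tendsto (fun z : ℝ => Real.exp (-z ^ 2 / 2)) Filter.atTop (nhds 0) := by
    apply Real.tendsto_exp_atBot.comp
    have : Filter.Tendsto (fun z : ℝ => z ^ 2 / 2) Filter.atTop Filter.atTop :=
      (Filter.tendsto_pow_atTop (by norm_num)).atTop_div_const (by norm_num)
    have h2 := Filter.tendsto_neg_atBot_iff.mpr this
    refine h2.congr fun z => by ring
  have h3 := h.div_const (Real.sqrt (2 * Real.pi))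
  rw [zero_div] at h3
  exact h3.congr fun z => rfl

lemma zpdf_tendsto_zero :
    Filter.Tendsto (fun z : ℝ => z * stdNormalPdf z) Filter.atTop (nhds 0) := by
  have hb : Filter.Tendsto (fun z : ℝ => z * Real.exp (-z)) Filter.atTop (nhds 0) := by
    simpa using Real.tendsto_pow_mul_exp_neg_atTop_nhds_zero 1
  have hsq : Filter.Tendsto (fun z : ℝ => z * Real.exp (-z ^ 2 / 2)) Filter.atTop (nhds 0) := by
    apply squeeze_zero' (g := fun z => z * Real.exp (-z))
    · filter_upwards [Filter.eventually_ge_atTop (0:ℝ)] with z hz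
      positivity
    · filter_upwards [Filter.eventually_ge_atTop (2:ℝ)] with z hz
      have : -z ^ 2 / 2 ≤ -z := by nlinarith
      exact mul_le_mul_of_nonneg_left (Real.exp_le_exp.2 this) (by linarith)
    · exact hb
  have h4 := hsq.div_const (Real.sqrt (2 * Real.pi))
  rw [zero_div] at h4
  exact h4.congr fun z => by rw [stdNormalPdf, mul_div_assoc]

end limits

section part2
open Real MeasureTheory Filter Set

noncomputable def Qf (z : ℝ) : ℝ := 1 - stdNormalCdf z

lemma Q_hasDerivAt (z : ℝ) : HasDerivAt Qf (-(stdNormalPdf z)) z := by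
  exact ((cdf_hasDerivAt z).const_sub 1)

lemma tail_integral {z : ℝ} (hz : 0 ≤ z) :
    ∫ t in Set.Ioi z, t * stdNormalPdf t = stdNormalPdf z := by
  have hderiv : ∀ x ∈ Set.Ici z, HasDerivAt (fun t => -stdNormalPdf t) (x * stdNormalPdf x) x := by
    intro x _
    exact (pdf_hasDerivAt x).neg.congr_deriv (by ring)
  have hnn : ∀ x ∈ Set.Ioi z, 0 ≤ x * stdNormalPdf x := fun x hx =>
    mul_nonneg (hz.trans (le_of_lt hx)) (pdf_pos x).le
  have hlim : Tendsto (fun t => -stdNormalPdf t) atTop (nhds 0) := by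
    rw [← neg_zero]
    exact (pdf_tendsto_zero).neg
  have := integral_Ioi_of_hasDerivAt_of_nonneg' hderiv hnn hlim
  simpa using this

lemma tail_integrableOn {z : ℝ} (hz : 0 ≤ z) :
    IntegrableOn (fun t => t * stdNormalPdf t) (Set.Ioi z) := by
  have hderiv : ∀ x ∈ Set.Ici z, HasDerivAt (fun t => -stdNormalPdf t) (x * stdNormalPdf x) x := by
    intro x _
    exact (pdf_hasDerivAt x).neg.congr_deriv (by ring)
  have hnn : ∀ x ∈ Set.Ioi z, 0 ≤ x * stdNormalPdf x := fun x hx =>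
    mul_nonneg (hz.trans (le_of_lt hx)) (pdf_pos x).le
  have hlim : Tendsto (fun t => -stdNormalPdf t) atTop (nhds 0) := by
    rw [← neg_zero]; exact (pdf_tendsto_zero).neg
  exact integrableOn_Ioi_deriv_of_nonneg' hderiv hnn hlim

lemma zQ_le_pdf {z : ℝ} (hz : 0 < z) : z * Qf z ≤ stdNormalPdf z := by
  have h1 : z * Qf z = ∫ t in Set.Ioi z, z * stdNormalPdf t := by
    rw [Qf, Q_eq, integral_const_mul]
  rw [h1, ← tail_integral hz.le]
  apply setIntegral_mono_on
  · exact (pdf_integrable.const_mul z).integrableOn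
  · exact tail_integrableOn hz.le
  · exact measurableSet_Ioi
  · intro t ht
    exact mul_le_mul_of_nonneg_right (le_of_lt ht) (pdf_pos t).le

end part2

section part3
open Real MeasureTheory Filter Set

lemma Qf_pos (z : ℝ) : 0 < Qf z := Q_pos z

lemma Q_tendsto_zero : Tendsto Qf atTop (nhds 0) := by
  apply squeeze_zero' (g := stdNormalPdf)
  · exact Eventually.of_forall fun z => (Q_pos z).le
  · filter_upwards [eventually_ge_atTop (1:ℝ)] with z hz
    have h := zQ_le_pdf (lt_of_lt_of_le one_pos hz)
    nlinarith [Qf_pos z]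
  · exact pdf_tendsto_zero

lemma zQ_tendsto_zero : Tendsto (fun z => z * Qf z) atTop (nhds 0) := by
  apply squeeze_zero' (g := stdNormalPdf)
  · filter_upwards [eventually_ge_atTop (0:ℝ)] with z hz
    exact mul_nonneg hz (Q_pos z).le
  · filter_upwards [eventually_gt_atTop (0:ℝ)] with z hz
    exact zQ_le_pdf hz
  · exact pdf_tendsto_zero

lemma z2Q_tendsto_zero : Tendsto (fun z => z ^ 2 * Qf z) atTop (nhds 0) := by
  apply squeeze_zero' (g := fun z => z * stdNormalPdf z)
  · filter_upwards [eventually_ge_atTop (0:ℝ)] with z hz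
    exact mul_nonneg (by positivity) (Qf_pos z).le
  · filter_upwards [eventually_gt_atTop (0:ℝ)] with z hz
    have h := zQ_le_pdf hz
    nlinarith
  · exact zpdf_tendsto_zero

lemma pos_of_strictAnti_tendsto {f : ℝ → ℝ} (hf : StrictAnti f)
    (hlim : Tendsto f atTop (nhds 0)) (z : ℝ) : 0 < f z := by
  have h1 : 0 ≤ f (z + 1) := by
    refine le_of_tendsto hlim ?_
    filter_upwards [eventually_ge_atTop (z + 1)] with w hw
    exact hf.antitone hw
  calc 0 ≤ f (z + 1) := h1
    _ < f z := hf (by linarith)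

lemma neg_of_strictMono_tendsto {f : ℝ → ℝ} (hf : StrictMono f)
    (hlim : Tendsto f atTop (nhds 0)) (z : ℝ) : f z < 0 := by
  have := pos_of_strictAnti_tendsto (f := fun z => -(f z)) (fun a b h => by simpa using hf h)
    (by simpa using hlim.neg) z
  linarith

noncomputable def gf (z : ℝ) : ℝ := stdNormalPdf z - z * Qf z
noncomputable def kf (z : ℝ) : ℝ := (1 + z ^ 2) * Qf z - z * stdNormalPdf z
noncomputable def hf (z : ℝ) : ℝ :=
  stdNormalPdf z ^ 2 - z * stdNormalPdf z * Qf z - Qf z ^ 2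

lemma g_hasDerivAt (z : ℝ) : HasDerivAt gf (-(Qf z)) z := by
  have hid : HasDerivAt (fun x : ℝ => x) 1 z := hasDerivAt_id z
  have := ((pdf_hasDerivAt z).sub (hid.mul (Q_hasDerivAt z)))
  exact this.congr_deriv (by ring)

lemma k_hasDerivAt (z : ℝ) : HasDerivAt kf (-2 * gf z) z := by
  have h1 : HasDerivAt (fun z : ℝ => 1 + z ^ 2) (2 * z) z := by
    simpa using (hasDerivAt_pow 2 z).const_add 1
  have hid : HasDerivAt (fun x : ℝ => x) 1 z := hasDerivAt_id z
  have := (h1.mul (Q_hasDerivAt z)).sub (hid.mul (pdf_hasDerivAt z))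
  exact this.congr_deriv (by rw [gf]; ring)

lemma h_hasDerivAt (z : ℝ) : HasDerivAt hf (stdNormalPdf z * kf z) z := by
  have hp := pdf_hasDerivAt z
  have hq := Q_hasDerivAt z
  have hid : HasDerivAt (fun x : ℝ => x) 1 z := hasDerivAt_id z
  have h1 := ((hp.pow 2).sub ((hid.mul hp).mul hq)).sub (hq.pow 2)
  exact h1.congr_deriv (by rw [kf]; simp only [Pi.mul_apply]; ring)

lemma g_pos (z : ℝ) : 0 < gf z := by
  refine pos_of_strictAnti_tendsto ?_ ?_ z
  · refine strictAnti_of_hasDerivAt_neg (f' := fun z => -(Qf z)) g_hasDerivAt fun x => ?_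
    show -(Qf x) < 0
    simpa using Qf_pos x
  · have := pdf_tendsto_zero.sub zQ_tendsto_zero
    rw [sub_zero] at this
    exact this

lemma k_pos (z : ℝ) : 0 < kf z := by
  refine pos_of_strictAnti_tendsto ?_ ?_ z
  · refine strictAnti_of_hasDerivAt_neg (f' := fun z => -2 * gf z) k_hasDerivAt fun x => ?_
    show -2 * gf x < 0
    nlinarith [g_pos x]
  · have h1 : Tendsto (fun z : ℝ => Qf z + z ^ 2 * Qf z - z * stdNormalPdf z) atTop (nhds 0) := by
      have := (Q_tendsto_zero.add z2Q_tendsto_zero).sub zpdf_tendsto_zero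
      simpa using this
    exact h1.congr fun z => by rw [kf]; ring

lemma h_neg (z : ℝ) : hf z < 0 := by
  refine neg_of_strictMono_tendsto ?_ ?_ z
  · refine strictMono_of_hasDerivAt_pos (f' := fun z => stdNormalPdf z * kf z) h_hasDerivAt
      fun x => mul_pos (pdf_pos x) (k_pos x)
  · have h1 := ((pdf_tendsto_zero.mul pdf_tendsto_zero).sub
      (zpdf_tendsto_zero.mul Q_tendsto_zero)).sub (Q_tendsto_zero.mul Q_tendsto_zero)
    have h2 : Tendsto (fun z : ℝ => stdNormalPdf z * stdNormalPdf z -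
        z * stdNormalPdf z * Qf z - Qf z * Qf z) atTop (nhds 0) := by simpa using h1
    exact h2.congr fun z => by rw [hf]; ring

lemma mills_hasDerivAt (z : ℝ) :
    HasDerivAt mills
      ((stdNormalPdf z ^ 2 - z * stdNormalPdf z * Qf z) / Qf z ^ 2) z := by
  have hq : Qf z ≠ 0 := (Q_pos z).ne'
  have := (pdf_hasDerivAt z).div (Q_hasDerivAt z) hq
  have h2 : mills = fun z => stdNormalPdf z / Qf z := by
    funext z; rw [mills, Qf]
  rw [h2]
  exact this.congr_deriv (by ring)

lemma mills_deriv_mem (z : ℝ) :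
    0 < (stdNormalPdf z ^ 2 - z * stdNormalPdf z * Qf z) / Qf z ^ 2 ∧
    (stdNormalPdf z ^ 2 - z * stdNormalPdf z * Qf z) / Qf z ^ 2 < 1 := by
  have hq := Q_pos z
  have hq2 : 0 < Qf z ^ 2 := by positivity
  constructor
  · apply div_pos _ hq2
    have := mul_pos (pdf_pos z) (g_pos z)
    rw [gf] at this; nlinarith
  · rw [div_lt_one hq2]
    have := h_neg z
    rw [hf] at this; linarith

end part3

section main
open Real MeasureTheory Filter Set

noncomputable def millsD (z : ℝ) : ℝ :=
  (stdNormalPdf z ^ 2 - z * stdNormalPdf z * Qf z) / Qf z ^ 2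

lemma mills_hasDerivAt' (z : ℝ) : HasDerivAt mills (millsD z) z := mills_hasDerivAt z

lemma deriv_mills_eq (z : ℝ) : deriv mills z = millsD z := (mills_hasDerivAt' z).deriv

/-- **Strict monotonicity of the expected gap.** For `σ̂ > 0`, the expected-gap
function `G(a) = μ̂ + σ̂·λ((a − μ̂)/σ̂) − a` is differentiable with
`G'(a) = λ'((a − μ̂)/σ̂) − 1 ∈ (−1, 0)` for every `a`; in particular `G` is
strictly decreasing on `ℝ`. -/
theorem expectedGap_strictAnti (μhat σhat : ℝ) (hσ : 0 < σhat) :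
    Differentiable ℝ (fun a : ℝ => μhat + σhat * mills ((a - μhat) / σhat) - a) ∧
    (∀ a : ℝ,
      deriv (fun a : ℝ => μhat + σhat * mills ((a - μhat) / σhat) - a) a
        = deriv mills ((a - μhat) / σhat) - 1 ∧
      -1 < deriv (fun a : ℝ => μhat + σhat * mills ((a - μhat) / σhat) - a) a ∧
      deriv (fun a : ℝ => μhat + σhat * mills ((a - μhat) / σhat) - a) a < 0) ∧
    StrictAnti (fun a : ℝ => μhat + σhat * mills ((a - μhat) / σhat) - a) := by
  have hσ' : σhat ≠ 0 := hσ.ne'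
  have hF : ∀ a : ℝ, HasDerivAt (fun a : ℝ => μhat + σhat * mills ((a - μhat) / σhat) - a)
      (millsD ((a - μhat) / σhat) - 1) a := by
    intro a
    have hu : HasDerivAt (fun a : ℝ => (a - μhat) / σhat) (1 / σhat) a := by
      simpa using ((hasDerivAt_id a).sub_const μhat).div_const σhat
    have hm : HasDerivAt (fun a : ℝ => mills ((a - μhat) / σhat))
        (millsD ((a - μhat) / σhat) * (1 / σhat)) a :=
      by have := (mills_hasDerivAt' ((a - μhat) / σhat)).comp a hu; exact this
    have := ((hm.const_mul σhat).const_add μhat).sub (hasDerivAt_id a)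
    exact this.congr_deriv (by field_simp)
  have hderiv : ∀ a : ℝ, deriv (fun a : ℝ => μhat + σhat * mills ((a - μhat) / σhat) - a) a
      = millsD ((a - μhat) / σhat) - 1 := fun a => (hF a).deriv
  refine ⟨fun a => (hF a).differentiableAt, fun a => ?_, ?_⟩
  · obtain ⟨h0, h1⟩ := mills_deriv_mem ((a - μhat) / σhat)
    refine ⟨by rw [hderiv, deriv_mills_eq], ?_, ?_⟩
    · rw [hderiv]; unfold millsD at *; linarith
    · rw [hderiv]; unfold millsD at *; linarith
  · refine strictAnti_of_hasDerivAt_neg hF fun a => ?_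
    obtain ⟨h0, h1⟩ := mills_deriv_mem ((a - μhat) / σhat)
    show millsD ((a - μhat) / σhat) - 1 < 0
    unfold millsD at *; linarith


end main
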